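/- Let E be a finite-dimensional vector space over a field k. For any two prevaluations v and v' on E there exists a frame L = {L₁,…,L_r} in E adapted simultaneously to both v and v'; that is, every subspace F_{v≥a} and every subspace F_{v'≥a}, a ∈ ℚ, is the sum of some subset of the L_i. (This is the statement, for GL(E), that any two points of the building lie in a common apartment.) -/

import Mathlib

open Module Submodule Set

universe u v


/-- A prevaluation on a vector space `E` over a field `k` (value at `0` irrelevant). -/
def IsPrevaluation (k : Type*) [Field k] {E : Type*} [AddCommGroup E] [Module k E]
    (v : E → ℚ) : Prop :=
  (∀ (c : k) (e : E), c ≠ 0 → e ≠ 0 → v (c • e) = v e) ∧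
  (∀ e₁ e₂ : E, e₁ ≠ 0 → e₂ ≠ 0 → e₁ + e₂ ≠ 0 → min (v e₁) (v e₂) ≤ v (e₁ + e₂))

/-- A frame in `E`: a finite collection of one-dimensional subspaces whose
(internal) direct sum is `E`. -/
def IsFrame {k E : Type*} [Field k] [AddCommGroup E] [Module k E]
    {ι : Type*} [Fintype ι] [DecidableEq ι] (L : ι → Submodule k E) : Prop :=
  (∀ i, Module.finrank k (L i) = 1) ∧ DirectSum.IsInternal L

/-- A frame `L` is adapted to `v` if every subspace `F_{v ≥ a}` is the sum of
some subset of the members of `L`. -/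
def AdaptedFrame {k E : Type*} [Field k] [AddCommGroup E] [Module k E]
    {ι : Type*} (v : E → ℚ) (L : ι → Submodule k E) : Prop :=
  ∀ a : ℚ, ∃ s : Finset ι, {e : E | e = 0 ∨ a ≤ v e} = ↑(∑ i ∈ s, L i)


namespace Stmt12Aux

open Module Submodule Set



section Core

variable (k : Type v) [Field k]

/-- A family of vectors adapted to a set of submodules: it is linearly independent, spans,
and every member of the set is the span of the vectors it contains. -/
def HasAdaptedBasis (E : Type u) [AddCommGroup E] [Module k E]
    (S : Set (Submodule k E)) : Prop :=
  ∃ (ι : Type) (_ : Fintype ι) (b : ι → E), LinearIndependent k b ∧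
    span k (Set.range b) = ⊤ ∧ ∀ W ∈ S, W = span k (Set.range b ∩ ↑W)

variable {k}

lemma hasAdaptedBasis_of_trivial {E : Type u} [AddCommGroup E] [Module k E]
    [FiniteDimensional k E] (S : Set (Submodule k E))
    (hS : ∀ W ∈ S, W = ⊥ ∨ W = ⊤) : HasAdaptedBasis k E S := by
  classical
  refine ⟨Fin (finrank k E), inferInstance, ⇑(Module.finBasis k E),
    (Module.finBasis k E).linearIndependent, (Module.finBasis k E).span_eq, ?_⟩
  intro W hW
  rcases hS W hW with rfl | rfl
  · refine le_antisymm bot_le (span_le.mpr ?_)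
    exact Set.inter_subset_right
  · rw [Submodule.top_coe, Set.inter_univ, (Module.finBasis k E).span_eq]

/-- The gluing step: an adapted family of a minimal member `F₁` of the first chain
together with well-chosen lifts of an adapted family of the quotient `E ⧸ F₁`. -/
lemma glue {E : Type u} [AddCommGroup E] [Module k E] [FiniteDimensional k E]
    (C D : Set (Submodule k E)) (hD : IsChain (· ≤ ·) D)
    (F₁ : Submodule k E)
    (hmin : ∀ W ∈ C, W = ⊥ ∨ F₁ ≤ W)
    (ι₁ : Type) (_ : Fintype ι₁) (u : ι₁ → F₁) (hu : LinearIndependent k u)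
    (hus : span k (Set.range u) = ⊤)
    (huD : ∀ G ∈ D, comap F₁.subtype G = span k (Set.range u ∩ ↑(comap F₁.subtype G)))
    (ι₂ : Type) (_ : Fintype ι₂) (w : ι₂ → E ⧸ F₁) (hw : LinearIndependent k w)
    (hws : span k (Set.range w) = ⊤)
    (hwC : ∀ W ∈ C, map F₁.mkQ W = span k (Set.range w ∩ ↑(map F₁.mkQ W)))
    (hwD : ∀ G ∈ D, map F₁.mkQ G = span k (Set.range w ∩ ↑(map F₁.mkQ G))) :
    HasAdaptedBasis k E (C ∪ D) := by
  classical
  set π := F₁.mkQ with hπ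
  -- choose lifts of the `w j` lying in every member of `D` possible
  have hlift : ∀ j : ι₂, ∃ x : E, π x = w j ∧ ∀ G ∈ D, w j ∈ map π G → x ∈ G := by
    intro j
    by_cases hS : ∃ G ∈ D, w j ∈ map π G
    · obtain ⟨G', hG', hwG'⟩ := hS
      obtain ⟨G₀, ⟨hG₀D, hwG₀⟩, hmin₀⟩ :=
        (IsWellFounded.wf : WellFounded ((· < ·) : Submodule k E → Submodule k E → Prop)).has_min
          {G | G ∈ D ∧ w j ∈ map π G} ⟨G', hG', hwG'⟩
      obtain ⟨x, hxG₀, hx⟩ := hwG₀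
      refine ⟨x, hx, fun G hG hwG => ?_⟩
      have hle : G₀ ≤ G := by
        rcases eq_or_ne G G₀ with rfl | hne
        · exact le_rfl
        rcases hD.total hG₀D hG with h | h
        · exact h
        · rcases lt_or_eq_of_le h with h' | h'
          · exact absurd h' (hmin₀ G ⟨hG, hwG⟩)
          · exact h'.ge
      exact hle hxG₀
    · obtain ⟨x, hx⟩ := F₁.mkQ_surjective (w j)
      exact ⟨x, hx, fun G hG hwG => absurd ⟨G, hG, hwG⟩ hS⟩
  choose x hxπ hxG using hlift
  have hπx : π ∘ x = w := funext hxπ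
  -- basic facts
  have hspanF₁ : span k (Set.range (F₁.subtype ∘ u)) = F₁ := by
    rw [Set.range_comp, ← Submodule.map_span, hus, Submodule.map_top, Submodule.range_subtype]
  have hLIx : LinearIndependent k x :=
    LinearIndependent.of_comp π (by rw [hπx]; exact hw)
  have hdisj : Disjoint F₁ (span k (Set.range x)) := by
    rw [Submodule.disjoint_def]
    intro y hyF hyspan
    obtain ⟨c, hc⟩ := Finsupp.mem_span_range_iff_exists_finsupp.mp hyspan
    have hπy : π y = 0 := by
      rw [hπ, ← LinearMap.mem_ker, Submodule.ker_mkQ]; exact hyF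
    have h0 : (c.sum fun i a => a • w i) = 0 := by
      have h := congrArg π hc
      rw [map_finsuppSum] at h
      simp only [map_smul, hxπ, hπy] at h
      simpa using h
    have hc0 : c = 0 := by
      apply linearIndependent_iff.mp hw
      rw [Finsupp.linearCombination_apply]; exact h0
    rw [← hc, hc0, Finsupp.sum_zero_index]
  -- the glued family
  set b : ι₁ ⊕ ι₂ → E := Sum.elim (F₁.subtype ∘ u) x with hb
  have hrange : Set.range b = Set.range (F₁.subtype ∘ u) ∪ Set.range x := Sum.elim_range _ _
  refine ⟨ι₁ ⊕ ι₂, inferInstance, b, ?_, ?_, ?_⟩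
  · exact LinearIndependent.sum_type (hu.map' F₁.subtype F₁.ker_subtype) hLIx
      (by rw [hspanF₁]; exact hdisj)
  · rw [hrange, Submodule.span_union, hspanF₁]
    have hmap : map π (span k (Set.range x)) = ⊤ := by
      rw [Submodule.map_span, ← Set.range_comp, hπx, hws]
    have h := Submodule.comap_map_eq π (span k (Set.range x))
    rw [hmap, Submodule.comap_top, Submodule.ker_mkQ] at h
    rw [sup_comm]; exact h.symm
  · intro W hW
    have key : ∀ V : Submodule k E, map π V = span k (Set.range w ∩ ↑(map π V)) →
        (∀ j, w j ∈ map π V → x j ∈ V) →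
        F₁ ⊓ V ≤ span k (Set.range b ∩ ↑V) → V = span k (Set.range b ∩ ↑V) := by
      intro V hq hxV hFV
      refine le_antisymm ?_ (span_le.mpr Set.inter_subset_right)
      intro y hy
      have h1 : π y ∈ map π V := mem_map_of_mem hy
      rw [hq] at h1
      have key2 : span k (Set.range w ∩ ↑(map π V)) ≤ map π (span k (Set.range b ∩ ↑V)) := by
        refine span_le.mpr ?_
        rintro ξ ⟨⟨j, rfl⟩, hξ⟩
        exact ⟨x j, subset_span ⟨⟨Sum.inr j, rfl⟩, hxV j hξ⟩, hxπ j⟩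
      obtain ⟨z, hz, hzy⟩ := key2 h1
      have hyz : y - z ∈ F₁ := by
        rw [← Submodule.ker_mkQ F₁, LinearMap.mem_ker, ← hπ, map_sub, hzy, sub_self]
      have hzV : z ∈ V := (span_le.mpr Set.inter_subset_right : span k (Set.range b ∩ ↑V) ≤ V) hz
      have h2 : y - z ∈ span k (Set.range b ∩ ↑V) := hFV ⟨hyz, V.sub_mem hy hzV⟩
      have h3 := add_mem h2 hz
      rwa [sub_add_cancel] at h3
    rcases hW with hWC | hWD
    · rcases hmin W hWC with rfl | hF₁W
      · exact (le_antisymm (span_le.mpr Set.inter_subset_right) bot_le).symm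
      · refine key W (hwC W hWC) ?_ ?_
        · intro j hj
          have hx : x j ∈ comap π (map π W) := mem_comap.mpr (by rw [hxπ]; exact hj)
          rwa [Submodule.comap_map_eq, hπ, Submodule.ker_mkQ, sup_eq_left.mpr hF₁W] at hx
        · refine le_trans inf_le_left ?_
          rw [← hspanF₁]
          refine span_mono ?_
          rintro ξ ⟨i, rfl⟩
          exact ⟨⟨Sum.inl i, rfl⟩, hF₁W (u i).2⟩
    · refine key W (hwD W hWD) (fun j hj => hxG j W hWD hj) ?_
      rw [← Submodule.map_comap_subtype, huD W hWD, Submodule.map_span]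
      refine span_mono ?_
      rintro ξ ⟨η, ⟨⟨i, rfl⟩, hη⟩, rfl⟩
      exact ⟨⟨Sum.inl i, rfl⟩, hη⟩

end Core

section Induction

variable {k : Type v} [Field k]

lemma step {E : Type u} [AddCommGroup E] [Module k E] [FiniteDimensional k E] {n : ℕ}
    (IH : ∀ (E' : Type u) [AddCommGroup E'] [Module k E'] [FiniteDimensional k E'],
      finrank k E' ≤ n → ∀ C D : Set (Submodule k E'), IsChain (· ≤ ·) C →
      IsChain (· ≤ ·) D → HasAdaptedBasis k E' (C ∪ D))
    (hn : finrank k E ≤ n + 1)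
    (C D : Set (Submodule k E)) (hC : IsChain (· ≤ ·) C) (hD : IsChain (· ≤ ·) D)
    (W₀ : Submodule k E) (hW₀ : W₀ ∈ C) (hW₀b : W₀ ≠ ⊥) (hW₀t : W₀ ≠ ⊤) :
    HasAdaptedBasis k E (C ∪ D) := by
  classical
  obtain ⟨F₁, ⟨hF₁C, hF₁b⟩, hminlt⟩ :=
    (IsWellFounded.wf : WellFounded ((· < ·) : Submodule k E → Submodule k E → Prop)).has_min
      {W | W ∈ C ∧ W ≠ ⊥} ⟨W₀, hW₀, hW₀b⟩
  have hmin : ∀ W ∈ C, W = ⊥ ∨ F₁ ≤ W := by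
    intro W hW
    rcases eq_or_ne W ⊥ with rfl | hWb
    · exact Or.inl rfl
    refine Or.inr ?_
    rcases hC.total hF₁C hW with h | h
    · exact h
    rcases lt_or_eq_of_le h with h' | h'
    · exact absurd h' (hminlt W ⟨hW, hWb⟩)
    · exact h'.ge
  have hF₁t : F₁ ≠ ⊤ := by
    intro h
    rcases hmin W₀ hW₀ with rfl | hle
    · exact hW₀b rfl
    · exact hW₀t (top_le_iff.mp (h ▸ hle))
  have hposF₁ : 0 < finrank k F₁ := by
    haveI : Nontrivial F₁ := Submodule.nontrivial_iff_ne_bot.mpr hF₁b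
    exact Module.finrank_pos
  have hltF₁ : finrank k F₁ < finrank k E := Submodule.finrank_lt hF₁t
  have hq := Submodule.finrank_quotient_add_finrank F₁
  have hltQ : finrank k (E ⧸ F₁) < finrank k E := by omega
  obtain ⟨ι₁, i₁, u, hu, hus, huad⟩ :=
    IH F₁ (by omega) ((comap F₁.subtype) '' D) ((comap F₁.subtype) '' D)
      (hD.image_of_map_rel (· ≤ ·) (· ≤ ·) (comap F₁.subtype) fun _ _ h => Submodule.comap_mono h)
      (hD.image_of_map_rel (· ≤ ·) (· ≤ ·) (comap F₁.subtype) fun _ _ h => Submodule.comap_mono h)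
  obtain ⟨ι₂, i₂, w, hw, hws, hwad⟩ :=
    IH (E ⧸ F₁) (by omega) ((map F₁.mkQ) '' C) ((map F₁.mkQ) '' D)
      (hC.image_of_map_rel (· ≤ ·) (· ≤ ·) (map F₁.mkQ) fun _ _ h => Submodule.map_mono h)
      (hD.image_of_map_rel (· ≤ ·) (· ≤ ·) (map F₁.mkQ) fun _ _ h => Submodule.map_mono h)
  refine glue C D hD F₁ hmin ι₁ i₁ u hu hus ?_ ι₂ i₂ w hw hws ?_ ?_
  · intro G hG; exact huad _ (Or.inl ⟨G, hG, rfl⟩)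
  · intro W hW; exact hwad _ (Or.inl ⟨W, hW, rfl⟩)
  · intro G hG; exact hwad _ (Or.inr ⟨G, hG, rfl⟩)

lemma core : ∀ (n : ℕ) (E : Type u) [AddCommGroup E] [Module k E] [FiniteDimensional k E],
    finrank k E ≤ n → ∀ C D : Set (Submodule k E), IsChain (· ≤ ·) C → IsChain (· ≤ ·) D →
    HasAdaptedBasis k E (C ∪ D) := by
  intro n
  induction n with
  | zero =>
    intro E _ _ _ hn C D _ _
    apply hasAdaptedBasis_of_trivial
    intro W _
    left
    have h0 : finrank k E = 0 := Nat.le_zero.mp hn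
    haveI : Subsingleton E := Module.finrank_zero_iff.mp h0
    exact Subsingleton.elim W ⊥
  | succ n IHn =>
    intro E _ _ _ hn C D hC hD
    by_cases h1 : ∃ W ∈ C, W ≠ ⊥ ∧ W ≠ ⊤
    · obtain ⟨W₀, h, hb, ht⟩ := h1
      exact step IHn hn C D hC hD W₀ h hb ht
    by_cases h2 : ∃ W ∈ D, W ≠ ⊥ ∧ W ≠ ⊤
    · obtain ⟨W₀, h, hb, ht⟩ := h2
      rw [Set.union_comm]
      exact step IHn hn D C hD hC W₀ h hb ht
    · apply hasAdaptedBasis_of_trivial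
      push_neg at h1 h2
      rintro W (hW | hW)
      · by_cases hb : W = ⊥
        · exact Or.inl hb
        · exact Or.inr (h1 W hW hb)
      · by_cases hb : W = ⊥
        · exact Or.inl hb
        · exact Or.inr (h2 W hW hb)

end Induction

section Preval

variable {k : Type v} [Field k] {E : Type u} [AddCommGroup E] [Module k E]

/-- The filtration submodule `F_{v ≥ a}` of a prevaluation. -/
def prefil (v : E → ℚ) (hv : IsPrevaluation k v) (a : ℚ) : Submodule k E where
  carrier := {e : E | e = 0 ∨ a ≤ v e}
  zero_mem' := Or.inl rfl
  add_mem' := by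
    intro e₁ e₂ h1 h2
    by_cases he₁ : e₁ = 0
    · subst he₁; simpa using h2
    by_cases he₂ : e₂ = 0
    · subst he₂; simpa using h1
    by_cases hs : e₁ + e₂ = 0
    · exact Or.inl hs
    refine Or.inr ?_
    refine le_trans (le_min (h1.resolve_left he₁) (h2.resolve_left he₂)) ?_
    exact hv.2 e₁ e₂ he₁ he₂ hs
  smul_mem' := by
    intro c e h
    by_cases hc : c = 0
    · subst hc; simp
    by_cases he : e = 0
    · subst he; simp
    exact Or.inr (by rw [hv.1 c e hc he]; exact h.resolve_left he)

lemma prefil_mono (v : E → ℚ) (hv : IsPrevaluation k v) {a a' : ℚ} (h : a ≤ a') :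
    prefil v hv a' ≤ prefil v hv a :=
  fun _ he => he.imp id h.trans

lemma prefil_chain (v : E → ℚ) (hv : IsPrevaluation k v) :
    IsChain (· ≤ ·) (Set.range (prefil v hv)) := by
  rintro _ ⟨a, rfl⟩ _ ⟨a', rfl⟩ _
  rcases le_total a a' with h | h
  · exact Or.inr (prefil_mono v hv h)
  · exact Or.inl (prefil_mono v hv h)

lemma span_sum_singleton {ι : Type*} (s : Finset ι) (f : ι → E) :
    ∑ i ∈ s, span k {f i} = span k (f '' ↑s) := by
  classical
  induction s using Finset.induction_on with
  | empty => simp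
  | insert _ _ ha ih =>
      rw [Finset.sum_insert ha, Finset.coe_insert, Set.image_insert_eq,
        Submodule.span_insert, ← ih, Submodule.add_eq_sup]

end Preval


end Stmt12Aux

/-- Any two prevaluations on a finite-dimensional vector space admit a common
adapted frame: any two points of the building of `GL(E)` lie in a common
apartment. -/
theorem stmt12 {k E : Type*} [Field k] [AddCommGroup E] [Module k E] [FiniteDimensional k E]
    (v v' : E → ℚ) (hv : IsPrevaluation k v) (hv' : IsPrevaluation k v') :
    ∃ (r : ℕ) (L : Fin r → Submodule k E),
      IsFrame L ∧ AdaptedFrame v L ∧ AdaptedFrame v' L := by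

  classical
  obtain ⟨ι, iFin, b, hLI, hspan, had⟩ :=
    Stmt12Aux.core (finrank k E) E le_rfl (Set.range (Stmt12Aux.prefil v hv)) (Set.range (Stmt12Aux.prefil v' hv'))
      (Stmt12Aux.prefil_chain v hv) (Stmt12Aux.prefil_chain v' hv')
  haveI := iFin
  set e := Fintype.equivFin ι with he
  set bb : Fin (Fintype.card ι) → E := b ∘ e.symm with hbb
  have hbbrange : Set.range bb = Set.range b := e.symm.surjective.range_comp b
  have hbbLI : LinearIndependent k bb := hLI.comp e.symm e.symm.injective
  have adapt : ∀ (vv : E → ℚ) (hvv : IsPrevaluation k vv),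
      (Stmt12Aux.prefil vv hvv) '' Set.univ ⊆ Set.range (Stmt12Aux.prefil v hv) ∪ Set.range (Stmt12Aux.prefil v' hv') →
      ∀ a : ℚ, ∃ s : Finset (Fin (Fintype.card ι)),
        {x : E | x = 0 ∨ a ≤ vv x} = ↑(∑ i ∈ s, span k {bb i}) := by
    intro vv hvv hsub a
    refine ⟨Finset.univ.filter (fun i => bb i ∈ Stmt12Aux.prefil vv hvv a), ?_⟩
    have h2 : bb '' ↑(Finset.univ.filter (fun i => bb i ∈ Stmt12Aux.prefil vv hvv a)) =
        Set.range bb ∩ ↑(Stmt12Aux.prefil vv hvv a) := by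
      ext ξ
      constructor
      · rintro ⟨i, hi, rfl⟩
        exact ⟨⟨i, rfl⟩, (Finset.mem_filter.mp hi).2⟩
      · rintro ⟨⟨i, rfl⟩, hξ⟩
        exact ⟨i, Finset.mem_filter.mpr ⟨Finset.mem_univ _, hξ⟩, rfl⟩
    rw [Stmt12Aux.span_sum_singleton, h2, hbbrange,
      ← had (Stmt12Aux.prefil vv hvv a) (hsub ⟨a, Set.mem_univ a, rfl⟩)]
    rfl
  refine ⟨Fintype.card ι, fun i => span k {bb i}, ⟨?_, ?_⟩, ?_, ?_⟩
  · intro i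
    exact finrank_span_singleton (hbbLI.ne_zero i)
  · rw [DirectSum.isInternal_submodule_iff_iSupIndep_and_iSup_eq_top]
    refine ⟨hbbLI.iSupIndep_span_singleton, ?_⟩
    rw [← span_range_eq_iSup, hbbrange, hspan]
  · exact adapt v hv (by rintro _ ⟨a, -, rfl⟩; exact Or.inl ⟨a, rfl⟩)
  · exact adapt v' hv' (by rintro _ ⟨a, -, rfl⟩; exact Or.inr ⟨a, rfl⟩)
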